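/- Let n be a positive integer, θ = π/n, α real with 0 < α < π, and z a complex number with |z|²·sin(α-θ) + z·sinθ + conj(z)·sinθ - sin(α+θ) = 0 (and assume all denominators below are nonzero). Then ∏_{k=0}^{n-1} |z·sin(kθ) - sin(α+kθ)| / |conj(z)·sin(α+kθ) - sin(kθ)| = 1. -/

import Mathlib

theorem stmt6 (n : ℕ) (hn : 0 < n) (θ α : ℝ) (hθ : θ = Real.pi / n)
    (hα : 0 < α ∧ α < Real.pi) (z : ℂ)
    (hz : (Complex.normSq z : ℂ) * (Real.sin (α - θ) : ℂ) + z * (Real.sin θ : ℂ) +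
          (starRingEnd ℂ) z * (Real.sin θ : ℂ) - (Real.sin (α + θ) : ℂ) = 0)
    (hden : ∀ k < n, (starRingEnd ℂ) z * (Real.sin (α + k * θ) : ℂ) - (Real.sin (k * θ) : ℂ) ≠ 0) :
    ∏ k ∈ Finset.range n,
      ‖z * (Real.sin (k * θ) : ℂ) - (Real.sin (α + k * θ) : ℂ)‖ /
        ‖(starRingEnd ℂ) z * (Real.sin (α + k * θ) : ℂ) - (Real.sin (k * θ) : ℂ)‖ = 1 := by
  obtain ⟨hα0, hαπ⟩ := hα
  have hA : 0 < Real.sin α := Real.sin_pos_of_pos_of_lt_pi hα0 hαπ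
  have hn0 : (n:ℝ) ≠ 0 := Nat.cast_ne_zero.mpr hn.ne'
  have hnθ : (n:ℝ) * θ = Real.pi := by rw [hθ]; field_simp
  set N : ℕ → ℂ := fun k => z * (Real.sin (k * θ) : ℂ) - (Real.sin (α + k * θ) : ℂ) with hNdef
  have hzz : (starRingEnd ℂ) z * z = (Complex.normSq z : ℂ) := by
    rw [mul_comm]; exact Complex.mul_conj z
  -- trig identities
  have T1 : ∀ x : ℝ, Real.sin θ * Real.sin (α + x) + Real.sin (α - θ) * Real.sin x
      = Real.sin α * Real.sin (x + θ) := by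
    intro x; simp only [Real.sin_add, Real.sin_sub]; ring
  have T2 : ∀ x : ℝ, Real.sin (α + θ) * Real.sin (α + x) - Real.sin θ * Real.sin x
      = Real.sin α * Real.sin (α + (x + θ)) := by
    intro x
    simp only [Real.sin_add, Real.cos_add]
    linear_combination (Real.sin θ * Real.sin x) * Real.sin_sq_add_cos_sq α
  have T3 : Real.sin (α - θ) * Real.sin (α + θ) + Real.sin θ ^ 2 = Real.sin α ^ 2 := by
    simp only [Real.sin_add, Real.sin_sub]
    linear_combination (Real.sin α ^ 2) * Real.sin_sq_add_cos_sq θ -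
      (Real.sin θ ^ 2) * Real.sin_sq_add_cos_sq α
  -- |w| = sin α
  set w : ℂ := z * (Real.sin (α - θ) : ℂ) + (Real.sin θ : ℂ) with hwdef
  have hw2 : w * (starRingEnd ℂ) w = ((Real.sin α : ℝ) : ℂ) ^ 2 := by
    have hcw : (starRingEnd ℂ) w = (starRingEnd ℂ) z * (Real.sin (α - θ) : ℂ) + (Real.sin θ : ℂ) := by
      rw [hwdef, map_add, map_mul, Complex.conj_ofReal, Complex.conj_ofReal]
    rw [hcw, hwdef]
    have T3c : ((Real.sin (α - θ) : ℝ) : ℂ) * (Real.sin (α + θ) : ℂ) + (Real.sin θ : ℂ) ^ 2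
        = ((Real.sin α : ℝ) : ℂ) ^ 2 := by exact_mod_cast congrArg (Complex.ofReal) T3
    linear_combination ((Real.sin (α - θ) : ℝ) : ℂ) * hz +
      ((Real.sin (α - θ) : ℝ) : ℂ) ^ 2 * hzz + T3c
  have hwabs : ‖w‖ = Real.sin α := by
    have h1 : ((Complex.normSq w : ℝ) : ℂ) = ((Real.sin α : ℝ) : ℂ) ^ 2 := by
      rw [← Complex.mul_conj w]; exact hw2
    have h2 : Complex.normSq w = Real.sin α ^ 2 := by exact_mod_cast h1
    rw [Complex.norm_def, h2, Real.sqrt_sq hA.le]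
  -- key identity
  have key : ∀ k : ℕ,
      ((starRingEnd ℂ) z * (Real.sin (α + k * θ) : ℂ) - (Real.sin (k * θ) : ℂ)) * w
      = -(Real.sin α : ℂ) * N (k + 1) := by
    intro k
    have hk1 : ((k + 1 : ℕ) : ℝ) * θ = k * θ + θ := by push_cast; ring
    have T1c : ((Real.sin θ : ℝ) : ℂ) * (Real.sin (α + k * θ) : ℂ) +
        (Real.sin (α - θ) : ℂ) * (Real.sin (k * θ) : ℂ)
        = (Real.sin α : ℂ) * (Real.sin (k * θ + θ) : ℂ) := by
      exact_mod_cast congrArg Complex.ofReal (T1 (k * θ))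
    have T2c : ((Real.sin (α + θ) : ℝ) : ℂ) * (Real.sin (α + k * θ) : ℂ) -
        (Real.sin θ : ℂ) * (Real.sin (k * θ) : ℂ)
        = (Real.sin α : ℂ) * (Real.sin (α + (k * θ + θ)) : ℂ) := by
      exact_mod_cast congrArg Complex.ofReal (T2 (k * θ))
    simp only [hNdef, hwdef, hk1]
    linear_combination ((Real.sin (α + k * θ) : ℝ) : ℂ) * hz +
      ((Real.sin (α - θ) : ℝ) : ℂ) * ((Real.sin (α + k * θ) : ℝ) : ℂ) * hzz +
      (-z) * T1c + T2c
  have habs : ∀ k : ℕ,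
      ‖(starRingEnd ℂ) z * (Real.sin (α + k * θ) : ℂ) - (Real.sin (k * θ) : ℂ)‖
      = ‖N (k + 1)‖ := by
    intro k
    have h := congrArg norm (key k)
    rw [norm_mul, norm_mul, hwabs] at h
    have hA' : ‖-(Real.sin α : ℂ)‖ = Real.sin α := by
      rw [norm_neg, Complex.norm_real, Real.norm_eq_abs, abs_of_pos hA]
    rw [hA'] at h
    exact mul_right_cancel₀ hA.ne' (by rw [h]; ring)
  -- values at 0 and n
  have hN0 : ‖N 0‖ = Real.sin α := by
    simp only [hNdef, Nat.cast_zero, zero_mul, Real.sin_zero, Complex.ofReal_zero, mul_zero,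
      add_zero, zero_sub]
    rw [norm_neg, Complex.norm_real, Real.norm_eq_abs, abs_of_pos hA]
  have hNn : ‖N n‖ = Real.sin α := by
    simp only [hNdef, hnθ, Real.sin_pi, Complex.ofReal_zero, mul_zero, zero_sub]
    have : Real.sin (α + Real.pi) = -Real.sin α := by
      rw [Real.sin_add, Real.sin_pi, Real.cos_pi]; ring
    rw [this, Complex.ofReal_neg, neg_neg, Complex.norm_real, Real.norm_eq_abs, abs_of_pos hA]
  have hNne : ∀ k < n, ‖N (k + 1)‖ ≠ 0 := by
    intro k hk
    rw [← habs k]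
    exact norm_ne_zero_iff.mpr (hden k hk)
  -- telescoping
  have tel : ∀ m ≤ n, ∏ k ∈ Finset.range m, ‖N k‖ / ‖N (k + 1)‖
      = ‖N 0‖ / ‖N m‖ := by
    intro m hm
    induction m with
    | zero =>
      rw [Finset.prod_range_zero, div_self (by rw [hN0]; exact hA.ne')]
    | succ m ih =>
      rw [Finset.prod_range_succ, ih (Nat.le_of_succ_le hm)]
      have h1 : ‖N m‖ ≠ 0 := by
        cases m with
        | zero => rw [hN0]; exact hA.ne'
        | succ p => exact hNne p (by omega)
      field_simp
  calc ∏ k ∈ Finset.range n,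
      ‖z * (Real.sin (k * θ) : ℂ) - (Real.sin (α + k * θ) : ℂ)‖ /
        ‖(starRingEnd ℂ) z * (Real.sin (α + k * θ) : ℂ) - (Real.sin (k * θ) : ℂ)‖
      = ∏ k ∈ Finset.range n, ‖N k‖ / ‖N (k + 1)‖ := by
        apply Finset.prod_congr rfl
        intro k hk
        rw [habs k]
    _ = ‖N 0‖ / ‖N n‖ := tel n le_rfl
    _ = 1 := by rw [hN0, hNn, div_self hA.ne']
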